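/- Let T > 0, let X ⊂ ℝ^n and U ⊂ ℝ^m be compact sets, set Σ := [0,T] × X × U, let f : ℝ^n × ℝ^m → ℝ^n be continuous, and let ρ₀ be a Borel probability measure on X. Define Δ to be the set of pairs (μ,ν), where μ is a finite Borel measure on Σ with total mass μ(Σ) = T and ν is a Borel probability measure on X, such that for every continuously differentiable v : ℝ × ℝ^n → ℝ one has ∫_X v(T,x) dν(x) − ∫_X v(0,x) dρ₀(x) = ∫_Σ ( ∂_t v(t,x) + ∇_x v(t,x) · f(x,u) ) dμ(t,x,u). Then (a) Δ is convex: if (μ₁,ν₁), (μ₂,ν₂) ∈ Δ and α ∈ [0,1], then (α μ₁ + (1−α) μ₂, α ν₁ + (1−α) ν₂) ∈ Δ; and (b) Δ is compact in the product of the topologies of weak convergence of finite measures on Σ and of probability measures on X. -/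

import Mathlib

open MeasureTheory
open scoped ENNReal NNReal

set_option linter.unusedSectionVars false
set_option maxHeartbeats 1000000

open BoundedContinuousFunction Filter Set TopologicalSpace
open scoped Topology

open MeasureTheory BoundedContinuousFunction Filter Set TopologicalSpace
open scoped ENNReal NNReal Topology

noncomputable section RMK

variable {Ω : Type*} [MetricSpace Ω] [CompactSpace Ω] [MeasurableSpace Ω] [BorelSpace Ω]

/-- Package a continuous `ℝ≥0`-valued function on a compact space as a bounded continuous
function. -/
def cbc (g : Ω → ℝ≥0) (hg : Continuous g) : Ω →ᵇ ℝ≥0 :=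
  mkOfCompact ⟨g, hg⟩

@[simp] lemma cbc_apply (g : Ω → ℝ≥0) (hg : Continuous g) (x : Ω) : cbc g hg x = g x := rfl

variable (Λ : (Ω →ᵇ ℝ≥0) →ₗ[ℝ≥0] ℝ≥0)

lemma bcnn_apply_le (f : Ω →ᵇ ℝ≥0) (x : Ω) : f x ≤ nndist f 0 := by
  have h := nndist_coe_le_nndist (f := f) (g := 0) x
  simpa using h.trans_eq rfl

lemma lam_mono {f g : Ω →ᵇ ℝ≥0} (h : ∀ x, f x ≤ g x) : Λ f ≤ Λ g := by
  have hg : g = f + cbc (fun x => g x - f x) ((map_continuous g).sub (map_continuous f)) := by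
    ext x
    push_cast [coe_add, Pi.add_apply, cbc_apply]
    exact_mod_cast (add_tsub_cancel_of_le (h x)).symm
  rw [hg, map_add]
  exact le_self_add

/-- Bounded continuous function from a compactly supported one. -/
def bcfOfCc : CompactlySupportedContinuousMap Ω ℝ≥0 →ₗ[ℝ≥0] (Ω →ᵇ ℝ≥0) where
  toFun g := mkOfCompact g.toContinuousMap
  map_add' _ _ := by ext; rfl
  map_smul' _ _ := by ext; rfl

/-- Compactly supported function from a bounded continuous one. -/
def toCc (g : Ω →ᵇ ℝ≥0) : CompactlySupportedContinuousMap Ω ℝ≥0 :=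
  CompactlySupportedContinuousMap.continuousMapEquiv g.toContinuousMap

lemma bcfOfCc_toCc (g : Ω →ᵇ ℝ≥0) : bcfOfCc (toCc g) = g := by ext; rfl

/-- The functional transported to compactly supported functions. -/
def Λc : CompactlySupportedContinuousMap Ω ℝ≥0 →ₗ[ℝ≥0] ℝ≥0 := Λ.comp bcfOfCc

/-- The Riesz content auxiliary function. -/
def rcaB : Compacts Ω → ℝ≥0 := rieszContentAux (Λc Λ)

lemma rcaB_image_nonempty (K : Compacts Ω) :
    (Λc Λ '' { f : CompactlySupportedContinuousMap Ω ℝ≥0 | ∀ x ∈ K, (1 : ℝ≥0) ≤ f x }).Nonempty :=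
  rieszContentAux_image_nonempty (Λc Λ) K

lemma rcaB_mono {K₁ K₂ : Compacts Ω} (h : K₁ ≤ K₂) : rcaB Λ K₁ ≤ rcaB Λ K₂ :=
  rieszContentAux_mono _ h

lemma rcaB_le {K : Compacts Ω} {f : Ω →ᵇ ℝ≥0} (h : ∀ x ∈ K, (1 : ℝ≥0) ≤ f x) :
    rcaB Λ K ≤ Λ f := by
  have := rieszContentAux_le (Λc Λ) (f := toCc f) h
  rwa [Λc, LinearMap.comp_apply, bcfOfCc_toCc] at this

lemma exists_lt_rcaB_add_pos (K : Compacts Ω) {ε : ℝ≥0} (hε : 0 < ε) :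
    ∃ f : Ω →ᵇ ℝ≥0, (∀ x ∈ K, (1 : ℝ≥0) ≤ f x) ∧ Λ f < rcaB Λ K + ε := by
  obtain ⟨g, hg1, hg2⟩ := exists_lt_rieszContentAux_add_pos (Λc Λ) K hε
  exact ⟨bcfOfCc g, hg1, hg2⟩

lemma rcaB_sup_le (K₁ K₂ : Compacts Ω) : rcaB Λ (K₁ ⊔ K₂) ≤ rcaB Λ K₁ + rcaB Λ K₂ :=
  rieszContentAux_sup_le (Λc Λ) K₁ K₂

/-- The Riesz content associated to a positive linear functional, on a compact metric space. -/
def rieszContent' : Content Ω where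
  toFun := rcaB Λ
  mono' K₁ K₂ h := rcaB_mono Λ h
  sup_le' := rcaB_sup_le Λ
  sup_disjoint' K₁ K₂ hd _ _ := by
    refine le_antisymm (rcaB_sup_le Λ K₁ K₂) ?_
    obtain ⟨u, hu0, hu1, hu01⟩ := exists_continuous_zero_one_of_isClosed
      K₁.isCompact.isClosed K₂.isCompact.isClosed hd
    have hWc : Continuous (fun x => (u x).toNNReal) :=
      continuous_real_toNNReal.comp (map_continuous u)
    have hW1 : ∀ x, (u x).toNNReal ≤ 1 := by
      intro x
      rw [show (1 : ℝ≥0) = Real.toNNReal 1 from (Real.toNNReal_one).symm]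
      exact Real.toNNReal_mono (hu01 x).2
    refine le_of_forall_pos_le_add ?_
    intro ε hε
    obtain ⟨h, hh1, hhΛ⟩ := exists_lt_rcaB_add_pos Λ (K₁ ⊔ K₂) hε
    have hptw : ∀ x, h x * (1 - (u x).toNNReal) + h x * (u x).toNNReal = h x := by
      intro x
      rw [← mul_add, tsub_add_cancel_of_le (hW1 x), mul_one]
    have hsum : cbc (fun x => h x * (1 - (u x).toNNReal))
          ((map_continuous h).mul (continuous_const.sub hWc))
        + cbc (fun x => h x * (u x).toNNReal) ((map_continuous h).mul hWc) = h := by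
      ext x
      simp only [coe_add, Pi.add_apply, cbc_apply]
      exact_mod_cast hptw x
    have e₁ : rcaB Λ K₁ ≤ Λ (cbc (fun x => h x * (1 - (u x).toNNReal))
        ((map_continuous h).mul (continuous_const.sub hWc))) := by
      refine rcaB_le Λ (fun x hx => ?_)
      have hwx : (u x).toNNReal = 0 := by rw [hu0 hx]; simp
      rw [cbc_apply, hwx, tsub_zero, mul_one]
      exact hh1 x (Or.inl hx)
    have e₂ : rcaB Λ K₂ ≤ Λ (cbc (fun x => h x * (u x).toNNReal)
        ((map_continuous h).mul hWc)) := by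
      refine rcaB_le Λ (fun x hx => ?_)
      have hwx : (u x).toNNReal = 1 := by rw [hu1 hx]; simp
      rw [cbc_apply, hwx, mul_one]
      exact hh1 x (Or.inr hx)
    calc rcaB Λ K₁ + rcaB Λ K₂ ≤ _ + _ := add_le_add e₁ e₂
      _ = Λ (_ + _) := (map_add Λ _ _).symm
      _ = Λ h := by rw [hsum]
      _ ≤ rcaB Λ (K₁ ⊔ K₂) + ε := le_of_lt hhΛ

/-- The Riesz measure associated to a positive linear functional on a compact metric space. -/
def rieszMeasure' : Measure Ω := (rieszContent' Λ).measure

lemma rieszMeasure'_univ_le : rieszMeasure' Λ univ ≤ (rcaB Λ ⊤ : ℝ≥0∞) := by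
  rw [rieszMeasure', Content.measure_apply _ MeasurableSet.univ,
    (rieszContent' Λ).outerMeasure_of_isOpen univ isOpen_univ]
  refine iSup_le fun K => iSup_le fun _ => ?_
  exact ENNReal.coe_le_coe.mpr (rcaB_mono Λ le_top)

instance : IsFiniteMeasure (rieszMeasure' Λ) :=
  ⟨lt_of_le_of_lt (rieszMeasure'_univ_le Λ) ENNReal.coe_lt_top⟩

end RMK
noncomputable section RMK2

variable {Ω : Type*} [MetricSpace Ω] [CompactSpace Ω] [MeasurableSpace Ω] [BorelSpace Ω]
variable (Λ : (Ω →ᵇ ℝ≥0) →ₗ[ℝ≥0] ℝ≥0)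

/-- The test function `x ↦ δ⁻¹ * min δ (f x - t)`. -/
def tf (f : Ω →ᵇ ℝ≥0) (t δ : ℝ≥0) : Ω →ᵇ ℝ≥0 :=
  cbc (fun x => δ⁻¹ * min δ (f x - t))
    (continuous_const.mul (continuous_const.min ((map_continuous f).sub continuous_const)))

variable {δ : ℝ≥0} (f : Ω →ᵇ ℝ≥0) (t : ℝ≥0)

lemma tf_le_one (x : Ω) : tf f t δ x ≤ 1 := by
  have : δ⁻¹ * min δ (f x - t) ≤ δ⁻¹ * δ := mul_le_mul_right (min_le_left _ _) _
  rcases eq_or_lt_of_le (zero_le : (0:ℝ≥0) ≤ δ) with h0 | h0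
  · simp [tf, ← h0]
  · simpa [tf, inv_mul_cancel₀ h0.ne'] using this

lemma tf_eq_one (hδ : 0 < δ) {x : Ω} (h : t + δ ≤ f x) : tf f t δ x = 1 := by
  have h1 : δ ≤ f x - t := le_tsub_of_add_le_left h
  have : min δ (f x - t) = δ := min_eq_left h1
  simp only [tf, cbc_apply, this]
  exact inv_mul_cancel₀ hδ.ne'

lemma tf_eq_zero {x : Ω} (h : f x ≤ t) : tf f t δ x = 0 := by
  simp only [tf, cbc_apply, tsub_eq_zero_of_le h]
  simp

lemma tf_smul (hδ : 0 < δ) (x : Ω) : δ * tf f t δ x = min δ (f x - t) := by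
  simp only [tf, cbc_apply, ← mul_assoc, mul_inv_cancel₀ hδ.ne', one_mul]

lemma sum_min_tsub (δ a : ℝ≥0) :
    ∀ N : ℕ, a ≤ (N : ℝ≥0) * δ → ∑ i ∈ Finset.range N, min δ (a - (i : ℝ≥0) * δ) = a := by
  intro N
  induction N with
  | zero =>
    intro h
    simp only [Nat.cast_zero, zero_mul, le_zero_iff] at h
    simp [h]
  | succ N ih =>
    intro h
    rw [Finset.sum_range_succ]
    rcases le_or_gt a ((N : ℝ≥0) * δ) with hle | hlt
    · rw [ih hle, tsub_eq_zero_of_le hle]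
      simp
    · have hterm : ∀ i ∈ Finset.range N, min δ (a - (i : ℝ≥0) * δ) = δ := by
        intro i hi
        refine min_eq_left ?_
        have hiN : (i : ℝ≥0) + 1 ≤ (N : ℝ≥0) := by
          exact_mod_cast Nat.succ_le_of_lt (Finset.mem_range.mp hi)
        have hc : (i : ℝ≥0) * δ ≤ a := by
          refine le_trans (mul_le_mul_left ?_ δ) hlt.le
          exact le_trans (le_add_right le_rfl) hiN
        rw [le_tsub_iff_left hc]
        calc (i : ℝ≥0) * δ + δ = ((i : ℝ≥0) + 1) * δ := by ring
          _ ≤ (N : ℝ≥0) * δ := mul_le_mul_left hiN δ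
          _ ≤ a := hlt.le
      rw [Finset.sum_congr rfl hterm, Finset.sum_const, Finset.card_range, nsmul_eq_mul]
      have hlast : min δ (a - (N : ℝ≥0) * δ) = a - (N : ℝ≥0) * δ := by
        refine min_eq_right (tsub_le_iff_right.mpr ?_)
        calc a ≤ ((N : ℕ) + 1 : ℝ≥0) * δ := by exact_mod_cast h
          _ = δ + (N : ℝ≥0) * δ := by push_cast; ring
      rw [hlast, add_tsub_cancel_of_le hlt.le]

/-- Decomposition of `f` into a sum of test functions. -/
lemma bcf_eq_sum_tf (hδ : 0 < δ) (N : ℕ) (hN : nndist f 0 ≤ (N : ℝ≥0) * δ) (x : Ω) :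
    (f x : ℝ≥0) = ∑ i ∈ Finset.range N, δ * tf f ((i : ℝ≥0) * δ) δ x := by
  have hxb : f x ≤ (N : ℝ≥0) * δ := le_trans (bcnn_apply_le f x) hN
  calc (f x : ℝ≥0) = ∑ i ∈ Finset.range N, min δ (f x - (i : ℝ≥0) * δ) :=
        (sum_min_tsub δ (f x) N hxb).symm
    _ = ∑ i ∈ Finset.range N, δ * tf f ((i : ℝ≥0) * δ) δ x := by
        refine Finset.sum_congr rfl fun i _ => (tf_smul f _ hδ x).symm

end RMK2
noncomputable section RMK3

variable {Ω : Type*} [MetricSpace Ω] [CompactSpace Ω] [MeasurableSpace Ω] [BorelSpace Ω]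
variable (Λ : (Ω →ᵇ ℝ≥0) →ₗ[ℝ≥0] ℝ≥0)
variable (f : Ω →ᵇ ℝ≥0) {δ : ℝ≥0}

/-- The compact superlevel set `{x | t ≤ f x}`. -/
def cptA (t : ℝ≥0) : Compacts Ω :=
  ⟨{x | t ≤ f x}, (isClosed_le continuous_const (map_continuous f)).isCompact⟩

lemma lam_tf_le_content (t : ℝ≥0) : Λ (tf f t δ) ≤ rcaB Λ (cptA f t) := by
  refine le_csInf (rcaB_image_nonempty Λ _) ?_
  rintro b ⟨g, hg, rfl⟩
  refine lam_mono Λ fun x => ?_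
  rcases le_or_gt (f x) t with h | h
  · rw [tf_eq_zero f t h]; exact zero_le
  · exact (tf_le_one f t x).trans (hg x h.le)

lemma meas_lt_le_lam (hδ : 0 < δ) (t : ℝ≥0) :
    rieszMeasure' Λ {x | t + δ < f x} ≤ (Λ (tf f t δ) : ℝ≥0∞) := by
  have hopen : IsOpen {x : Ω | t + δ < f x} := isOpen_lt continuous_const (map_continuous f)
  rw [rieszMeasure', Content.measure_apply _ hopen.measurableSet,
    (rieszContent' Λ).outerMeasure_of_isOpen _ hopen]
  refine iSup_le fun K => iSup_le fun hK => ENNReal.coe_le_coe.mpr (rcaB_le Λ ?_)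
  intro x hx
  exact le_of_eq (tf_eq_one f t hδ (le_of_lt (hK hx))).symm

lemma content_le_meas (t : ℝ≥0) :
    (rcaB Λ (cptA f t) : ℝ≥0∞) ≤ rieszMeasure' Λ (cptA f t : Set Ω) := by
  have hmeas : MeasurableSet (cptA f t : Set Ω) :=
    (cptA f t).isCompact.isClosed.measurableSet
  rw [rieszMeasure', (rieszContent' Λ).measure_apply hmeas]
  exact (rieszContent' Λ).le_outerMeasure_compacts _

lemma meas_le_lintegral (hδ : 0 < δ) (t : ℝ≥0) :
    rieszMeasure' Λ {x | t + δ ≤ f x} ≤ ∫⁻ x, (tf f t δ x : ℝ≥0∞) ∂(rieszMeasure' Λ) := by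
  rw [← lintegral_indicator_one (isClosed_le continuous_const (map_continuous f)).measurableSet]
  refine lintegral_mono fun x => ?_
  by_cases hx : x ∈ {x : Ω | t + δ ≤ f x}
  · rw [Set.indicator_of_mem hx, tf_eq_one f t hδ hx]
    simp
  · rw [Set.indicator_of_notMem hx]
    exact zero_le

lemma lintegral_le_meas_lt (t : ℝ≥0) :
    ∫⁻ x, (tf f t δ x : ℝ≥0∞) ∂(rieszMeasure' Λ) ≤ rieszMeasure' Λ {x | t < f x} := by
  refine lintegral_le_meas (fun x => ?_) (fun x hx => ?_)
  · exact_mod_cast tf_le_one f t x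
  · have : f x ≤ t := not_lt.mp hx
    rw [tf_eq_zero f t this]
    simp

/-- **Riesz representation** on a compact metric space: the Riesz measure represents `Λ`. -/
theorem lintegral_rieszMeasure' (f : Ω →ᵇ ℝ≥0) :
    ∫⁻ x, (f x : ℝ≥0∞) ∂(rieszMeasure' Λ) = Λ f := by
  set μ := rieszMeasure' Λ with hμ
  set L := rcaB Λ ⊤ with hL
  have hfin : ∫⁻ x, (f x : ℝ≥0∞) ∂μ < ⊤ := by
    refine lt_of_le_of_lt (lintegral_mono (g := fun _ => (nndist f 0 : ℝ≥0∞)) fun x => ?_) ?_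
    · exact (ENNReal.coe_le_coe.mpr (bcnn_apply_le f x) : (f x : ℝ≥0∞) ≤ (nndist f 0 : ℝ≥0∞))
    · rw [lintegral_const]
      exact ENNReal.mul_lt_top ENNReal.coe_lt_top (measure_lt_top μ _)
  have main : ∀ δ : ℝ≥0, 0 < δ →
      (∫⁻ x, (f x : ℝ≥0∞) ∂μ ≤ (Λ f : ℝ≥0∞) + δ * L ∧
       (Λ f : ℝ≥0∞) ≤ ∫⁻ x, (f x : ℝ≥0∞) ∂μ + δ * L) := by
    intro δ hδ
    obtain ⟨N, hN⟩ := exists_nat_ge (nndist f 0 / δ)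
    have hNδ : nndist f 0 ≤ ((N + 1 : ℕ) : ℝ≥0) * δ := by
      have h1 : nndist f 0 ≤ (N : ℝ≥0) * δ := by
        rw [← div_le_iff₀ hδ]
        exact hN
      refine h1.trans (mul_le_mul_left ?_ δ)
      exact_mod_cast Nat.le_succ N
    set g : ℕ → Ω →ᵇ ℝ≥0 := fun i => tf f ((i : ℝ≥0) * δ) δ with hg
    have hcast : ∀ i : ℕ, ((i + 1 : ℕ) : ℝ≥0) * δ = (i : ℝ≥0) * δ + δ := by
      intro i; push_cast; ring
    -- decomposition of the lintegral
    have S2 : ∫⁻ x, (f x : ℝ≥0∞) ∂μ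
        = ∑ i ∈ Finset.range (N + 1), (δ : ℝ≥0∞) * ∫⁻ x, (g i x : ℝ≥0∞) ∂μ := by
      have hx : ∀ x, (f x : ℝ≥0∞) = ∑ i ∈ Finset.range (N + 1), (δ : ℝ≥0∞) * (g i x : ℝ≥0∞) := by
        intro x
        exact_mod_cast congrArg (fun r : ℝ≥0 => (r : ℝ≥0∞)) (bcf_eq_sum_tf f hδ (N + 1) hNδ x)
      rw [lintegral_congr hx, lintegral_finset_sum]
      · refine Finset.sum_congr rfl fun i _ => ?_
        exact lintegral_const_mul _ ((map_continuous (g i)).measurable.coe_nnreal_ennreal)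
      · exact fun i _ => ((map_continuous (g i)).measurable.coe_nnreal_ennreal).const_mul _
    -- decomposition of the functional
    have S1 : (Λ f : ℝ≥0∞) = ∑ i ∈ Finset.range (N + 1), (δ : ℝ≥0∞) * (Λ (g i) : ℝ≥0∞) := by
      have hfs : f = ∑ i ∈ Finset.range (N + 1), δ • g i := by
        ext x
        have h1 : (f x : ℝ≥0) = ∑ i ∈ Finset.range (N + 1), δ * g i x :=
          bcf_eq_sum_tf f hδ (N + 1) hNδ x
        have h2 : (∑ i ∈ Finset.range (N + 1), δ • g i) x
            = ∑ i ∈ Finset.range (N + 1), δ * g i x := by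
          induction' (Finset.range (N + 1)) using Finset.induction with a s ha ih
          · simp
          · simp [Finset.sum_insert ha, ih, smul_eq_mul]
        exact_mod_cast h1.trans h2.symm
      have h3 : Λ f = ∑ i ∈ Finset.range (N + 1), δ * Λ (g i) := by
        rw [hfs, map_sum]
        exact Finset.sum_congr rfl fun i _ => by rw [_root_.map_smul, smul_eq_mul]
      rw [h3]
      push_cast
      rfl
    -- bounds
    have B0int : ∫⁻ x, (g 0 x : ℝ≥0∞) ∂μ ≤ (L : ℝ≥0∞) := by
      refine le_trans (lintegral_le_meas (fun x => ?_) (fun x hx => absurd (Set.mem_univ x) hx))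
        ((measure_mono (Set.subset_univ _)).trans (rieszMeasure'_univ_le Λ))
      exact_mod_cast tf_le_one f _ x
    have B0lam : (Λ (g 0) : ℝ≥0∞) ≤ (L : ℝ≥0∞) := by
      refine ENNReal.coe_le_coe.mpr ((lam_tf_le_content Λ f _).trans ?_)
      exact rcaB_mono Λ le_top
    have Bint : ∀ i : ℕ, ∫⁻ x, (g (i + 1) x : ℝ≥0∞) ∂μ ≤ (Λ (g i) : ℝ≥0∞) := by
      intro i
      refine (lintegral_le_meas_lt Λ f _).trans ?_
      have : {x : Ω | ((i + 1 : ℕ) : ℝ≥0) * δ < f x} = {x : Ω | (i : ℝ≥0) * δ + δ < f x} := by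
        rw [hcast i]
      rw [this]
      exact meas_lt_le_lam Λ f hδ _
    have Blam : ∀ i : ℕ, (Λ (g (i + 1)) : ℝ≥0∞) ≤ ∫⁻ x, (g i x : ℝ≥0∞) ∂μ := by
      intro i
      refine le_trans (ENNReal.coe_le_coe.mpr (lam_tf_le_content Λ f _)) ?_
      refine (content_le_meas Λ f _).trans ?_
      have hset : (cptA f (((i + 1 : ℕ) : ℝ≥0) * δ) : Set Ω)
          = {x : Ω | (i : ℝ≥0) * δ + δ ≤ f x} := by
        simp only [cptA, Compacts.coe_mk, hcast i]
      rw [hset]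
      exact meas_le_lintegral Λ f hδ _
    constructor
    · rw [S2, S1, Finset.sum_range_succ' (fun i => (δ : ℝ≥0∞) * ∫⁻ x, (g i x : ℝ≥0∞) ∂μ) N]
      have step1 : ∑ i ∈ Finset.range N, (δ : ℝ≥0∞) * ∫⁻ x, (g (i + 1) x : ℝ≥0∞) ∂μ
          ≤ ∑ i ∈ Finset.range N, (δ : ℝ≥0∞) * (Λ (g i) : ℝ≥0∞) :=
        Finset.sum_le_sum fun i _ => mul_le_mul_right (Bint i) _
      have step2 : ∑ i ∈ Finset.range N, (δ : ℝ≥0∞) * (Λ (g i) : ℝ≥0∞)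
          ≤ ∑ i ∈ Finset.range (N + 1), (δ : ℝ≥0∞) * (Λ (g i) : ℝ≥0∞) :=
        Finset.sum_le_sum_of_subset (Finset.range_subset_range.mpr (Nat.le_succ N))
      refine add_le_add (step1.trans step2) (mul_le_mul_right B0int _)
    · rw [S1, S2, Finset.sum_range_succ' (fun i => (δ : ℝ≥0∞) * (Λ (g i) : ℝ≥0∞)) N]
      have step1 : ∑ i ∈ Finset.range N, (δ : ℝ≥0∞) * (Λ (g (i + 1)) : ℝ≥0∞)
          ≤ ∑ i ∈ Finset.range N, (δ : ℝ≥0∞) * ∫⁻ x, (g i x : ℝ≥0∞) ∂μ :=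
        Finset.sum_le_sum fun i _ => mul_le_mul_right (Blam i) _
      have step2 : ∑ i ∈ Finset.range N, (δ : ℝ≥0∞) * ∫⁻ x, (g i x : ℝ≥0∞) ∂μ
          ≤ ∑ i ∈ Finset.range (N + 1), (δ : ℝ≥0∞) * ∫⁻ x, (g i x : ℝ≥0∞) ∂μ :=
        Finset.sum_le_sum_of_subset (Finset.range_subset_range.mpr (Nat.le_succ N))
      refine add_le_add (step1.trans step2) (mul_le_mul_right B0lam _)
  have hchoice : ∀ ε : ℝ≥0, 0 < ε → ∃ δ : ℝ≥0, 0 < δ ∧ (δ : ℝ≥0∞) * L ≤ (ε : ℝ≥0∞) := by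
    intro ε hε
    rcases eq_or_ne L 0 with hL0 | hL0
    · exact ⟨1, one_pos, by simp [hL0]⟩
    · refine ⟨ε / L, ?_, ?_⟩
      · exact div_pos hε (pos_iff_ne_zero.mpr hL0)
      · rw [← ENNReal.coe_mul, div_mul_cancel₀ _ hL0]
  refine le_antisymm ?_ ?_
  · refine ENNReal.le_of_forall_pos_le_add fun ε hε _ => ?_
    obtain ⟨δ, hδ, hδL⟩ := hchoice ε hε
    exact ((main δ hδ).1).trans (add_le_add_right hδL _)
  · refine ENNReal.le_of_forall_pos_le_add fun ε hε _ => ?_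
    obtain ⟨δ, hδ, hδL⟩ := hchoice ε hε
    exact ((main δ hδ).2).trans (add_le_add_right hδL _)

end RMK3
noncomputable section RMK4

variable {Ω : Type*} [MetricSpace Ω] [CompactSpace Ω] [MeasurableSpace Ω] [BorelSpace Ω]
variable (Λ : (Ω →ᵇ ℝ≥0) →ₗ[ℝ≥0] ℝ≥0)

/-- The Riesz measure as a finite measure. -/
def rieszFM : FiniteMeasure Ω := ⟨rieszMeasure' Λ, inferInstance⟩

lemma rieszFM_testAgainstNN (f : Ω →ᵇ ℝ≥0) : (rieszFM Λ).testAgainstNN f = Λ f := by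
  have h1 : ((rieszFM Λ).testAgainstNN f : ℝ≥0∞) = ∫⁻ x, (f x : ℝ≥0∞) ∂(rieszMeasure' Λ) :=
    FiniteMeasure.testAgainstNN_coe_eq
  rw [lintegral_rieszMeasure' Λ f] at h1
  exact_mod_cast h1

/-- The set of finite measures with a fixed total mass on a compact metric space is compact in
the topology of weak convergence. -/
theorem isCompact_finiteMeasure_mass_eq (c : ℝ≥0) :
    IsCompact {μ : FiniteMeasure Ω | μ.mass = c} := by
  rw [isCompact_iff_ultrafilter_le_nhds]
  intro F hF
  have hS : {μ : FiniteMeasure Ω | μ.mass = c} ∈ F := le_principal_iff.mp hF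
  have key : ∀ f : Ω →ᵇ ℝ≥0, ∃ a : ℝ≥0,
      Tendsto (fun μ : FiniteMeasure Ω => μ.testAgainstNN f) F (𝓝 a) := by
    intro f
    have hbdd : {μ : FiniteMeasure Ω | μ.testAgainstNN f ∈ Icc (0 : ℝ≥0) (nndist f 0 * c)} ∈ F := by
      filter_upwards [hS] with μ hμ
      refine ⟨zero_le, ?_⟩
      have h1 := μ.testAgainstNN_lipschitz_estimate f 0
      rw [μ.testAgainstNN_zero, zero_add] at h1
      rw [← hμ]
      exact h1
    have hmem : Icc (0 : ℝ≥0) (nndist f 0 * c)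
        ∈ Filter.map (fun μ : FiniteMeasure Ω => μ.testAgainstNN f) (F : Filter _) :=
      mem_map.mpr hbdd
    obtain ⟨a, -, ha⟩ := (isCompact_Icc (a := (0:ℝ≥0)) (b := nndist f 0 * c)).ultrafilter_le_nhds
      (F.map (fun μ : FiniteMeasure Ω => μ.testAgainstNN f))
      (le_principal_iff.mpr (by rwa [Ultrafilter.coe_map]))
    rw [Ultrafilter.coe_map] at ha
    exact ⟨a, ha⟩
  choose Λ0 hΛ0 using key
  have hadd : ∀ f g : Ω →ᵇ ℝ≥0, Λ0 (f + g) = Λ0 f + Λ0 g := by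
    intro f g
    refine tendsto_nhds_unique (hΛ0 (f + g)) ?_
    have h2 := (hΛ0 f).add (hΛ0 g)
    simpa only [← FiniteMeasure.testAgainstNN_add] using h2
  have hsmul : ∀ (r : ℝ≥0) (f : Ω →ᵇ ℝ≥0), Λ0 (r • f) = r • Λ0 f := by
    intro r f
    refine tendsto_nhds_unique (hΛ0 (r • f)) ?_
    have h2 : Tendsto (fun μ : FiniteMeasure Ω => r • μ.testAgainstNN f) F (𝓝 (r • Λ0 f)) := by
      simpa only [smul_eq_mul] using (hΛ0 f).const_mul r
    simpa only [← FiniteMeasure.testAgainstNN_smul] using h2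
  set ΛL : (Ω →ᵇ ℝ≥0) →ₗ[ℝ≥0] ℝ≥0 :=
    { toFun := Λ0, map_add' := hadd, map_smul' := hsmul } with hΛL
  have hconv : ∀ f : Ω →ᵇ ℝ≥0,
      Tendsto (fun μ : FiniteMeasure Ω => μ.testAgainstNN f) F (𝓝 ((rieszFM ΛL).testAgainstNN f)) := by
    intro f
    rw [rieszFM_testAgainstNN]
    exact hΛ0 f
  refine ⟨rieszFM ΛL, ?_, ?_⟩
  · have h1 : Tendsto (fun μ : FiniteMeasure Ω => μ.testAgainstNN 1) F (𝓝 c) := by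
      refine Tendsto.congr' ?_ (tendsto_const_nhds (x := c))
      filter_upwards [hS] with μ hμ
      rw [FiniteMeasure.testAgainstNN_one, hμ]
    have h2 : (rieszFM ΛL).mass = ΛL 1 := by
      rw [← FiniteMeasure.testAgainstNN_one, rieszFM_testAgainstNN]
    rw [Set.mem_setOf_eq, h2]
    exact tendsto_nhds_unique (hΛ0 1) h1
  · have h3 : Tendsto (id : FiniteMeasure Ω → FiniteMeasure Ω) F (𝓝 (rieszFM ΛL)) := by
      rw [FiniteMeasure.tendsto_iff_forall_testAgainstNN_tendsto]
      exact hconv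
    exact tendsto_id'.mp h3

end RMK4

noncomputable section Helpers

/-- Package a continuous real-valued function on a compact space as a bounded continuous
function. -/
def cbcR {Ω : Type*} [TopologicalSpace Ω] [CompactSpace Ω] (g : Ω → ℝ) (hg : Continuous g) :
    Ω →ᵇ ℝ :=
  mkOfCompact ⟨g, hg⟩

lemma integral_convex_combo {Ω' : Type*} [MeasurableSpace Ω'] [MetricSpace Ω'] [CompactSpace Ω']
    [BorelSpace Ω'] {g : Ω' → ℝ} (hg : Continuous g) (a b : ℝ≥0) (μ ν : Measure Ω')
    [IsFiniteMeasure μ] [IsFiniteMeasure ν] :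
    ∫ x, g x ∂(a • μ + b • ν) = (a : ℝ) * ∫ x, g x ∂μ + (b : ℝ) * ∫ x, g x ∂ν := by
  have h1 : Integrable g (a • μ) := (cbcR g hg).integrable _
  have h2 : Integrable g (b • ν) := (cbcR g hg).integrable _
  have e1 : ∫ x, g x ∂(a • μ) = a • ∫ x, g x ∂μ := integral_smul_nnreal_measure (cbcR g hg) a
  have e2 : ∫ x, g x ∂(b • ν) = b • ∫ x, g x ∂ν := integral_smul_nnreal_measure (cbcR g hg) b
  rw [integral_add_measure h1 h2, e1, e2, NNReal.smul_def, NNReal.smul_def]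
  rfl

end Helpers

open scoped Topology

set_option synthInstance.maxHeartbeats 1000000 in
/-- **Convexity and weak compactness of the feasible set `Δ` of the OM-MFC problem.**
`Δ` consists of pairs `(μ, ν)` of a finite Borel measure `μ` on
`Σ = [0,T] × X × U` with total mass `T` and a Borel probability measure `ν` on `X`
(encoded as a finite measure of total mass `1`) satisfying the weak Liouville constraint.
Here `∂_t v (t,x) = fderiv ℝ v (t,x) (1,0)` and `∇_x v (t,x) ⬝ w = fderiv ℝ v (t,x) (0,w)`,
and the space of finite measures carries the topology of weak convergence. -/
theorem feasible_set_convex_and_compact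
    (n m : ℕ) (T : ℝ) (hT : 0 < T)
    (X : Set (EuclideanSpace ℝ (Fin n))) (hX : IsCompact X)
    (U : Set (EuclideanSpace ℝ (Fin m))) (hU : IsCompact U)
    (f : EuclideanSpace ℝ (Fin n) × EuclideanSpace ℝ (Fin m) → EuclideanSpace ℝ (Fin n))
    (hf : Continuous f)
    (ρ0 : Measure X) (hρ0 : IsProbabilityMeasure ρ0)
    (Δ : Set (FiniteMeasure (↥(Set.Icc (0:ℝ) T) × ↥X × ↥U) × FiniteMeasure ↥X))
    (hΔ : Δ = {p | (p.1 : Measure (↥(Set.Icc (0:ℝ) T) × ↥X × ↥U)) Set.univ = ENNReal.ofReal T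
        ∧ (p.2 : Measure ↥X) Set.univ = 1
        ∧ ∀ v : ℝ × EuclideanSpace ℝ (Fin n) → ℝ, ContDiff ℝ 1 v →
          (∫ y, v (T, (y : EuclideanSpace ℝ (Fin n))) ∂(p.2 : Measure ↥X))
              - (∫ y, v (0, (y : EuclideanSpace ℝ (Fin n))) ∂ρ0)
            = ∫ q, (fderiv ℝ v ((q.1 : ℝ), (q.2.1 : EuclideanSpace ℝ (Fin n))) (1, 0)
                + fderiv ℝ v ((q.1 : ℝ), (q.2.1 : EuclideanSpace ℝ (Fin n)))
                    (0, f ((q.2.1 : EuclideanSpace ℝ (Fin n)),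
                           (q.2.2 : EuclideanSpace ℝ (Fin m)))))
              ∂(p.1 : Measure (↥(Set.Icc (0:ℝ) T) × ↥X × ↥U))}) :
    -- (a) convexity of Δ
    (∀ p ∈ Δ, ∀ q ∈ Δ, ∀ α : ℝ, 0 ≤ α → α ≤ 1 →
      (α.toNNReal • p.1 + (1 - α).toNNReal • q.1,
       α.toNNReal • p.2 + (1 - α).toNNReal • q.2) ∈ Δ)
    ∧
    -- (b) compactness of Δ in the product of the topologies of weak convergence
    @IsCompact _ (@instTopologicalSpaceProd _ _ inferInstance inferInstance) Δ := by
  haveI : CompactSpace ↥(Set.Icc (0:ℝ) T) := isCompact_iff_compactSpace.mp isCompact_Icc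
  haveI : CompactSpace ↥X := isCompact_iff_compactSpace.mp hX
  haveI : CompactSpace ↥U := isCompact_iff_compactSpace.mp hU
  haveI hB1 : BorelSpace (↥(Set.Icc (0:ℝ) T) × ↥X × ↥U) := by infer_instance
  haveI hB2 : BorelSpace (↥X) := by infer_instance
  letI hTopP : TopologicalSpace
      (FiniteMeasure (↥(Set.Icc (0:ℝ) T) × ↥X × ↥U) × FiniteMeasure ↥X) :=
    @instTopologicalSpaceProd _ _ inferInstance inferInstance
  subst hΔ
  -- continuity of the left-hand-side integrand
  have hgL : ∀ v : ℝ × EuclideanSpace ℝ (Fin n) → ℝ, ContDiff ℝ 1 v →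
      Continuous (fun y : ↥X => v (T, (y : EuclideanSpace ℝ (Fin n)))) := fun v hv =>
    hv.continuous.comp (continuous_const.prodMk continuous_subtype_val)
  -- continuity of the right-hand-side integrand
  have hgR : ∀ v : ℝ × EuclideanSpace ℝ (Fin n) → ℝ, ContDiff ℝ 1 v →
      Continuous (fun q : ↥(Set.Icc (0:ℝ) T) × ↥X × ↥U =>
        (fderiv ℝ v ((q.1 : ℝ), (q.2.1 : EuclideanSpace ℝ (Fin n))) (1, 0)
          + fderiv ℝ v ((q.1 : ℝ), (q.2.1 : EuclideanSpace ℝ (Fin n)))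
              (0, f ((q.2.1 : EuclideanSpace ℝ (Fin n)),
                     (q.2.2 : EuclideanSpace ℝ (Fin m)))))) := by
    intro v hv
    have hD : Continuous (fderiv ℝ v) := hv.continuous_fderiv one_ne_zero
    have hc1 : Continuous (fun q : ↥(Set.Icc (0:ℝ) T) × ↥X × ↥U =>
        ((q.1 : ℝ), (q.2.1 : EuclideanSpace ℝ (Fin n)))) :=
      (continuous_subtype_val.comp continuous_fst).prodMk
        (continuous_subtype_val.comp (continuous_fst.comp continuous_snd))
    have hw : Continuous (fun q : ↥(Set.Icc (0:ℝ) T) × ↥X × ↥U =>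
        ((0 : ℝ), f ((q.2.1 : EuclideanSpace ℝ (Fin n)), (q.2.2 : EuclideanSpace ℝ (Fin m))))) :=
      continuous_const.prodMk (hf.comp
        ((continuous_subtype_val.comp (continuous_fst.comp continuous_snd)).prodMk
          (continuous_subtype_val.comp (continuous_snd.comp continuous_snd))))
    exact ((hD.comp hc1).clm_apply continuous_const).add ((hD.comp hc1).clm_apply hw)
  constructor
  · -- (a) convexity
    rintro p ⟨hp1, hp2, hp3⟩ q ⟨hq1, hq2, hq3⟩ α hα0 hα1
    have hα1' : (0:ℝ) ≤ 1 - α := by linarith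
    have ha : (α.toNNReal : ℝ) = α := Real.coe_toNNReal α hα0
    have hb : ((1 - α).toNNReal : ℝ) = 1 - α := Real.coe_toNNReal _ hα1'
    have hab : (α.toNNReal : ℝ≥0∞) + ((1 - α).toNNReal : ℝ≥0∞) = 1 := by
      have h0 : α.toNNReal + (1 - α).toNNReal = 1 := by
        rw [← Real.toNNReal_add hα0 hα1']
        norm_num
      exact_mod_cast h0
    refine ⟨?_, ?_, ?_⟩
    · simp only [FiniteMeasure.toMeasure_add, FiniteMeasure.toMeasure_smul,
        Measure.add_apply, Measure.smul_apply, hp1, hq1, ENNReal.smul_def, smul_eq_mul]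
      rw [← add_mul, hab, one_mul]
    · simp only [FiniteMeasure.toMeasure_add, FiniteMeasure.toMeasure_smul,
        Measure.add_apply, Measure.smul_apply, hp2, hq2, ENNReal.smul_def, smul_eq_mul]
      rw [mul_one, mul_one]
      exact_mod_cast hab
    · intro v hv
      have hEp := hp3 v hv
      have hEq := hq3 v hv
      rw [FiniteMeasure.toMeasure_add, FiniteMeasure.toMeasure_smul, FiniteMeasure.toMeasure_smul,
        FiniteMeasure.toMeasure_add, FiniteMeasure.toMeasure_smul, FiniteMeasure.toMeasure_smul,
        integral_convex_combo (hgL v hv), integral_convex_combo (hgR v hv), ha, hb]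
      linear_combination α * hEp + (1 - α) * hEq
  · -- (b) compactness
    refine IsCompact.of_isClosed_subset
      ((isCompact_finiteMeasure_mass_eq (Real.toNNReal T)).prod
        (isCompact_finiteMeasure_mass_eq 1)) ?_ ?_
    · -- closedness
      have hrw : {p : FiniteMeasure (↥(Set.Icc (0:ℝ) T) × ↥X × ↥U) × FiniteMeasure ↥X |
            (p.1 : Measure (↥(Set.Icc (0:ℝ) T) × ↥X × ↥U)) Set.univ = ENNReal.ofReal T
            ∧ (p.2 : Measure ↥X) Set.univ = 1
            ∧ ∀ v : ℝ × EuclideanSpace ℝ (Fin n) → ℝ, ContDiff ℝ 1 v →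
              (∫ y, v (T, (y : EuclideanSpace ℝ (Fin n))) ∂(p.2 : Measure ↥X))
                  - (∫ y, v (0, (y : EuclideanSpace ℝ (Fin n))) ∂ρ0)
                = ∫ q : ↥(Set.Icc (0:ℝ) T) × ↥X × ↥U, (fderiv ℝ v ((q.1 : ℝ), (q.2.1 : EuclideanSpace ℝ (Fin n))) (1, 0)
                    + fderiv ℝ v ((q.1 : ℝ), (q.2.1 : EuclideanSpace ℝ (Fin n)))
                        (0, f ((q.2.1 : EuclideanSpace ℝ (Fin n)),
                               (q.2.2 : EuclideanSpace ℝ (Fin m)))))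
                  ∂(p.1 : Measure (↥(Set.Icc (0:ℝ) T) × ↥X × ↥U))}
          = {p : FiniteMeasure (↥(Set.Icc (0:ℝ) T) × ↥X × ↥U) × FiniteMeasure ↥X |
              (p.1 : Measure (↥(Set.Icc (0:ℝ) T) × ↥X × ↥U)) Set.univ = ENNReal.ofReal T}
            ∩ ({p | (p.2 : Measure ↥X) Set.univ = 1}
            ∩ ⋂ (v : ℝ × EuclideanSpace ℝ (Fin n) → ℝ), ⋂ (_ : ContDiff ℝ 1 v),
              {p : FiniteMeasure (↥(Set.Icc (0:ℝ) T) × ↥X × ↥U) × FiniteMeasure ↥X |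
                (∫ y, v (T, (y : EuclideanSpace ℝ (Fin n))) ∂(p.2 : Measure ↥X))
                    - (∫ y, v (0, (y : EuclideanSpace ℝ (Fin n))) ∂ρ0)
                  = ∫ q : ↥(Set.Icc (0:ℝ) T) × ↥X × ↥U, (fderiv ℝ v ((q.1 : ℝ), (q.2.1 : EuclideanSpace ℝ (Fin n))) (1, 0)
                      + fderiv ℝ v ((q.1 : ℝ), (q.2.1 : EuclideanSpace ℝ (Fin n)))
                          (0, f ((q.2.1 : EuclideanSpace ℝ (Fin n)),
                                 (q.2.2 : EuclideanSpace ℝ (Fin m)))))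
                    ∂(p.1 : Measure (↥(Set.Icc (0:ℝ) T) × ↥X × ↥U))}) := by
        ext p
        simp only [Set.mem_setOf_eq, Set.mem_inter_iff, Set.mem_iInter]
      rw [hrw]
      refine IsClosed.inter ?_ (IsClosed.inter ?_ ?_)
      · have h1 : {p : FiniteMeasure (↥(Set.Icc (0:ℝ) T) × ↥X × ↥U) × FiniteMeasure ↥X |
              (p.1 : Measure (↥(Set.Icc (0:ℝ) T) × ↥X × ↥U)) Set.univ = ENNReal.ofReal T}
            = (fun p : FiniteMeasure (↥(Set.Icc (0:ℝ) T) × ↥X × ↥U) × FiniteMeasure ↥X =>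
                ((p.1.mass : ℝ≥0∞))) ⁻¹' {ENNReal.ofReal T} := by
          ext p
          simp only [Set.mem_setOf_eq, Set.mem_preimage, Set.mem_singleton_iff,
            FiniteMeasure.ennreal_mass]
        rw [h1]
        exact IsClosed.preimage
          (ENNReal.continuous_coe.comp (FiniteMeasure.continuous_mass.comp continuous_fst))
          isClosed_singleton
      · have h1 : {p : FiniteMeasure (↥(Set.Icc (0:ℝ) T) × ↥X × ↥U) × FiniteMeasure ↥X |
              (p.2 : Measure ↥X) Set.univ = 1}
            = (fun p : FiniteMeasure (↥(Set.Icc (0:ℝ) T) × ↥X × ↥U) × FiniteMeasure ↥X =>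
                ((p.2.mass : ℝ≥0∞))) ⁻¹' {1} := by
          ext p
          simp only [Set.mem_setOf_eq, Set.mem_preimage, Set.mem_singleton_iff,
            FiniteMeasure.ennreal_mass]
        rw [h1]
        exact IsClosed.preimage
          (ENNReal.continuous_coe.comp (FiniteMeasure.continuous_mass.comp continuous_snd))
          isClosed_singleton
      · refine isClosed_iInter fun v => isClosed_iInter fun hv => ?_
        refine isClosed_eq ?_ ?_
        · exact ((FiniteMeasure.continuous_integral_boundedContinuousFunction
            (cbcR _ (hgL v hv))).comp continuous_snd).sub continuous_const
        · exact (FiniteMeasure.continuous_integral_boundedContinuousFunction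
            (cbcR _ (hgR v hv))).comp continuous_fst
    · -- inclusion into the product of mass spheres
      rintro p ⟨hp1, hp2, -⟩
      constructor
      · refine ENNReal.coe_injective ?_
        rw [FiniteMeasure.ennreal_mass, hp1]
        rfl
      · refine ENNReal.coe_injective ?_
        rw [FiniteMeasure.ennreal_mass, hp2]
        rfl
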